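/- Let p > 5 and γ > 0, let ξ₃ ∈ (0,1) be the unique solution of ((p−5)/2)·∫_ξ^1 (1−s²)^{2/(p−1)} ds = ξ·(1−ξ²)^{2/(p−1)} in (0,1), and let ω > 4/γ². Set y₀ = (2/((p−1)√ω))·arctanh(2/(γ√ω)) and define φ : ℝ∖{0} → ℝ by φ(x) = sign(x)·(((p+1)ω/2)·sech²(((p−1)√ω/2)·(|x|+y₀)))^{1/(p−1)}. Then the inequality (1/γ)·(φ(0+) − φ(0−))² ≤ ((p−5)(p−1)/(2(p+1)))·∫_{ℝ} |φ(x)|^{p+1} dx holds if and only if ω ≥ 4/(γ²ξ₃²). -/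

import Mathlib

open MeasureTheory Real Set Filter Topology


/-- Inverse hyperbolic tangent. -/
noncomputable def arctanh (x : ℝ) : ℝ := Real.log ((1 + x) / (1 - x)) / 2

namespace OddProfileAux

noncomputable def T (u : ℝ) : ℝ := Real.sinh u / Real.cosh u

lemma hasDerivAt_T (u : ℝ) : HasDerivAt T ((1 / Real.cosh u) ^ 2) u := by
  have h := (Real.hasDerivAt_sinh u).div (Real.hasDerivAt_cosh u) (Real.cosh_pos u).ne'
  refine h.congr_deriv ?_
  have h2 := Real.cosh_sq_sub_sinh_sq u
  have h3 := (Real.cosh_pos u).ne'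
  rw [div_pow, one_pow, ← h2]
  ring

lemma T_strictMono : StrictMono T :=
  strictMono_of_deriv_pos fun u => by
    rw [(hasDerivAt_T u).deriv]
    positivity

lemma T_lt_one (u : ℝ) : T u < 1 := by
  rw [T, div_lt_one (Real.cosh_pos u)]
  have := Real.cosh_sub_sinh u
  have := Real.exp_pos (-u)
  linarith

lemma neg_one_lt_T (u : ℝ) : -1 < T u := by
  rw [T, lt_div_iff₀ (Real.cosh_pos u)]
  have := Real.sinh_add_cosh u
  have := Real.exp_pos u
  linarith

lemma T_sq (u : ℝ) : 1 - T u ^ 2 = (1 / Real.cosh u) ^ 2 := by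
  have h2 := Real.cosh_sq_sub_sinh_sq u
  have h3 := (Real.cosh_pos u).ne'
  rw [T]
  field_simp
  linarith

lemma T_arctanh {t : ℝ} (h1 : -1 < t) (h2 : t < 1) : T (arctanh t) = t := by
  have h1' : (0:ℝ) < 1 + t := by linarith
  have h2' : (0:ℝ) < 1 - t := by linarith
  have hr : 0 < (1 + t) / (1 - t) := div_pos h1' h2'
  set y := arctanh t with hy
  have hE : Real.exp y * Real.exp y = (1 + t) / (1 - t) := by
    rw [← Real.exp_add, hy, arctanh,
      show Real.log ((1+t)/(1-t)) / 2 + Real.log ((1+t)/(1-t)) / 2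
        = Real.log ((1+t)/(1-t)) by ring]
    exact Real.exp_log hr
  have hEpos := Real.exp_pos y
  have hden : Real.exp y + Real.exp (-y) > 0 := by positivity
  rw [T, Real.sinh_eq, Real.cosh_eq, Real.exp_neg]
  rw [div_eq_iff (by positivity : ((Real.exp y + (Real.exp y)⁻¹)/2) ≠ 0)]
  have hinv : Real.exp y * (Real.exp y)⁻¹ = 1 := mul_inv_cancel₀ hEpos.ne'
  field_simp at hE ⊢
  nlinarith [hEpos]

end OddProfileAux

lemma crux_sign (p ξ₃ ξ : ℝ) (hp : 5 < p) (hξ₃ : ξ₃ ∈ Set.Ioo (0:ℝ) 1)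
    (hξeq : (p - 5) / 2 * (∫ s in ξ₃..1, (1 - s ^ 2) ^ (2 / (p - 1)))
      = ξ₃ * (1 - ξ₃ ^ 2) ^ (2 / (p - 1)))
    (huniq : ∀ ζ ∈ Set.Ioo (0 : ℝ) 1,
      (p - 5) / 2 * (∫ s in ζ..1, (1 - s ^ 2) ^ (2 / (p - 1)))
        = ζ * (1 - ζ ^ 2) ^ (2 / (p - 1)) → ζ = ξ₃)
    (hξ : ξ ∈ Set.Ioo (0:ℝ) 1) :
    (ξ * (1 - ξ ^ 2) ^ (2 / (p - 1))
      ≤ (p - 5) / 2 * (∫ s in ξ..1, (1 - s ^ 2) ^ (2 / (p - 1)))) ↔ ξ ≤ ξ₃ := by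
  have hp1 : (0:ℝ) < p - 1 := by linarith
  set a : ℝ := 2 / (p - 1) with ha
  have hapos : 0 < a := by positivity
  set g : ℝ → ℝ := fun z => (p - 5) / 2 * (∫ s in z..1, (1 - s ^ 2) ^ a)
      - z * (1 - z ^ 2) ^ a with hg
  have hca : Continuous fun s : ℝ => (1 - s ^ 2) ^ a := by
    refine continuous_iff_continuousAt.2 fun s => ContinuousAt.rpow_const ?_ (Or.inr hapos.le)
    fun_prop
  have hint : ∀ u v : ℝ, IntervalIntegrable (fun s => (1 - s ^ 2) ^ a) volume u v :=
    fun u v => hca.intervalIntegrable u v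
  have hgc : Continuous g := by
    have hrepr : g = fun z => (p - 5) / 2 * (-∫ s in (1:ℝ)..z, (1 - s ^ 2) ^ a)
        - z * (1 - z ^ 2) ^ a := by
      funext z
      rw [hg]
      rw [intervalIntegral.integral_symm]
      simp only
      ring
    rw [hrepr]
    exact (continuous_const.mul (intervalIntegral.continuous_primitive hint 1).neg).sub
      (continuous_id.mul hca)
  have hzero : ∀ z ∈ Set.Ioo (0:ℝ) 1, g z = 0 → z = ξ₃ := by
    intro z hz h
    exact huniq z hz (by rw [hg] at h; simp only at h; linarith)
  have hg0 : 0 < g 0 := by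
    have hpos : 0 < ∫ s in (0:ℝ)..1, (1 - s ^ 2) ^ a := by
      refine intervalIntegral.intervalIntegral_pos_of_pos_on (hint 0 1) ?_ one_pos
      intro s hs
      have : 0 < 1 - s ^ 2 := by nlinarith [hs.1, hs.2]
      exact Real.rpow_pos_of_pos this a
    have : g 0 = (p - 5) / 2 * ∫ s in (0:ℝ)..1, (1 - s ^ 2) ^ a := by
      rw [hg]; simp
    rw [this]
    have : 0 < (p - 5) / 2 := by linarith
    positivity
  have hgneg : ∀ ζ : ℝ, 0 ≤ ζ → ζ < 1 → ∃ η, ζ < η ∧ η < 1 ∧ g η < 0 := by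
    intro ζ hζ0 hζ1
    have hp3 : (0:ℝ) < p - 3 := by linarith
    have hfrac : (p - 5) / (p - 3) < 1 := (div_lt_one hp3).2 (by linarith)
    set m := max ζ ((p - 5) / (p - 3)) with hm
    have hm1 : m < 1 := max_lt hζ1 hfrac
    set η := (m + 1) / 2 with hη
    have hmη : m < η := by rw [hη]; linarith
    have hη1 : η < 1 := by rw [hη]; linarith
    have hζη : ζ < η := lt_of_le_of_lt (le_max_left _ _) hmη
    have hfη : (p - 5) / (p - 3) < η := lt_of_le_of_lt (le_max_right _ _) hmη
    have hη0 : 0 < η := lt_of_le_of_lt hζ0 hζη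
    refine ⟨η, hζη, hη1, ?_⟩
    have hb : ∫ s in η..1, (1 - s ^ 2) ^ a ≤ (1 - η) * (1 - η ^ 2) ^ a := by
      have hmono : ∀ s ∈ Set.Icc η 1, (1 - s ^ 2) ^ a ≤ (1 - η ^ 2) ^ a := by
        intro s hs
        exact Real.rpow_le_rpow (by nlinarith [hs.1, hs.2]) (by nlinarith [hs.1, hs.2]) hapos.le
      have := intervalIntegral.integral_mono_on hη1.le (hint η 1)
        (intervalIntegrable_const (c := (1 - η ^ 2) ^ a)) hmono
      simpa [smul_eq_mul] using this
    have hfac : (p - 5) / 2 * (1 - η) - η < 0 := by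
      have : p - 5 < η * (p - 3) := by
        rw [div_lt_iff₀ hp3] at hfη; linarith
      nlinarith
    have hwpos : 0 < (1 - η ^ 2) ^ a :=
      Real.rpow_pos_of_pos (by nlinarith) a
    have : g η ≤ ((p - 5) / 2 * (1 - η) - η) * (1 - η ^ 2) ^ a := by
      rw [hg]
      simp only
      have h5 : (0:ℝ) ≤ (p - 5) / 2 := by linarith
      nlinarith [mul_le_mul_of_nonneg_left hb h5]
    calc g η ≤ ((p - 5) / 2 * (1 - η) - η) * (1 - η ^ 2) ^ a := this
      _ < 0 := mul_neg_of_neg_of_pos hfac hwpos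
  constructor
  · -- 0 ≤ g ξ → ξ ≤ ξ₃
    intro h
    have hgξ : 0 ≤ g ξ := by rw [hg]; simp only; linarith
    by_contra hc
    push_neg at hc  -- ξ₃ < ξ
    rcases eq_or_lt_of_le hgξ with heq | hlt
    · exact absurd (hzero ξ hξ heq.symm) (by linarith)
    · obtain ⟨η, hξη, hη1, hgη⟩ := hgneg ξ hξ.1.le hξ.2
      have hcont : ContinuousOn g (Set.Icc ξ η) := hgc.continuousOn
      have hsub := intermediate_value_Ioo' (le_of_lt hξη) hcont
      have h0 : (0:ℝ) ∈ Set.Ioo (g η) (g ξ) := ⟨hgη, hlt⟩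
      obtain ⟨z, hz, hz0⟩ := hsub h0
      have hz01 : z ∈ Set.Ioo (0:ℝ) 1 := ⟨lt_trans hξ.1 hz.1, lt_trans hz.2 hη1⟩
      have := hzero z hz01 hz0
      have := hz.1
      linarith
  · -- ξ ≤ ξ₃ → 0 ≤ g ξ
    intro h
    rcases eq_or_lt_of_le h with heq | hlt
    · subst heq; linarith [hξeq]
    · by_contra hc
      push_neg at hc
      have hgξ : g ξ < 0 := by rw [hg]; simp only; linarith
      have hcont : ContinuousOn g (Set.Icc 0 ξ) := hgc.continuousOn
      have hsub := intermediate_value_Ioo' hξ.1.le hcont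
      have h0 : (0:ℝ) ∈ Set.Ioo (g ξ) (g 0) := ⟨hgξ, hg0⟩
      obtain ⟨z, hz, hz0⟩ := hsub h0
      have hz01 : z ∈ Set.Ioo (0:ℝ) 1 := ⟨hz.1, lt_trans hz.2 hξ.2⟩
      have := hzero z hz01 hz0
      have := hz.2
      linarith

lemma two_le_iff_four_le_sq {u : ℝ} (hu : 0 < u) : 2 ≤ u ↔ 4 ≤ u ^ 2 := by
  constructor
  · intro h; nlinarith
  · intro h; nlinarith

set_option maxHeartbeats 1000000 in
open OddProfileAux in
/-- For the odd profile `φ_{ω,γ}^{odd}` with `p > 5`, the second-derivative condition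
`(1/γ)·(φ(0+) − φ(0−))² ≤ ((p−5)(p−1)/(2(p+1)))·∫|φ|^{p+1}` holds iff `ω ≥ 4/(γ²ξ₃²)`,
where `ξ₃` is the unique solution in `(0,1)` of
`((p−5)/2)·∫_ξ^1 (1−s²)^(2/(p−1)) ds = ξ·(1−ξ²)^(2/(p−1))`. -/
theorem odd_profile_second_derivative_condition_iff (p γ ω : ℝ) (hp : 5 < p) (hγ : 0 < γ)
    (ξ₃ : ℝ) (hξ₃ : ξ₃ ∈ Set.Ioo (0 : ℝ) 1)
    (hξeq : (p - 5) / 2 * (∫ s in ξ₃..1, (1 - s ^ 2) ^ (2 / (p - 1)))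
      = ξ₃ * (1 - ξ₃ ^ 2) ^ (2 / (p - 1)))
    (huniq : ∀ ξ ∈ Set.Ioo (0 : ℝ) 1,
      (p - 5) / 2 * (∫ s in ξ..1, (1 - s ^ 2) ^ (2 / (p - 1)))
        = ξ * (1 - ξ ^ 2) ^ (2 / (p - 1)) → ξ = ξ₃)
    (hω : 4 / γ ^ 2 < ω)
    (y₀ : ℝ) (hy₀ : y₀ = 2 / ((p - 1) * Real.sqrt ω) * arctanh (2 / (γ * Real.sqrt ω)))
    (φ : ℝ → ℝ)
    (hφ : ∀ x : ℝ, x ≠ 0 → φ x = Real.sign x * ((p + 1) * ω / 2 *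
      (1 / Real.cosh ((p - 1) * Real.sqrt ω / 2 * (|x| + y₀))) ^ 2) ^ (1 / (p - 1))) :
    ∀ Lp Lm : ℝ,
      Filter.Tendsto φ (nhdsWithin 0 (Set.Ioi 0)) (nhds Lp) →
      Filter.Tendsto φ (nhdsWithin 0 (Set.Iio 0)) (nhds Lm) →
      ((1 / γ) * (Lp - Lm) ^ 2
          ≤ (p - 5) * (p - 1) / (2 * (p + 1)) * ∫ x : ℝ, |φ x| ^ (p + 1)
        ↔ 4 / (γ ^ 2 * ξ₃ ^ 2) ≤ ω) := by
  intro Lp Lm hLp hLm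
  -- basic positivity
  have hp1 : (0:ℝ) < p - 1 := by linarith
  have hωpos : 0 < ω := lt_trans (by positivity) hω
  have hs : 0 < Real.sqrt ω := Real.sqrt_pos.2 hωpos
  have hss : Real.sqrt ω * Real.sqrt ω = ω := Real.mul_self_sqrt hωpos.le
  set α : ℝ := (p - 1) * Real.sqrt ω / 2 with hα
  have hαpos : 0 < α := by positivity
  set Cc : ℝ := (p + 1) * ω / 2 with hCc
  have hCpos : 0 < Cc := by rw [hCc]; positivity
  set a : ℝ := 2 / (p - 1) with ha
  have hapos : 0 < a := by positivity
  set q : ℝ := (p + 1) / (p - 1) with hq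
  have hq1a : q = 1 + a := by rw [hq, ha]; field_simp; ring
  set ξ : ℝ := 2 / (γ * Real.sqrt ω) with hξ
  have hγs : 0 < γ * Real.sqrt ω := by positivity
  have hξpos : 0 < ξ := by rw [hξ]; positivity
  have hγω2 : 2 < γ * Real.sqrt ω := by
    have h4 : 4 < γ ^ 2 * ω := by
      rw [div_lt_iff₀ (by positivity : (0:ℝ) < γ ^ 2)] at hω
      linarith
    nlinarith [hγs]
  have hξlt1 : ξ < 1 := by rw [hξ, div_lt_one hγs]; exact hγω2
  have hξmem : ξ ∈ Set.Ioo (0:ℝ) 1 := ⟨hξpos, hξlt1⟩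
  -- α * y₀ = arctanh ξ
  have hαy : α * y₀ = arctanh ξ := by
    rw [hy₀, hα, hξ]
    field_simp
  have hTξ : T (α * y₀) = ξ := by
    rw [hαy]; exact T_arctanh (by linarith) hξlt1
  -- the substitution function
  set f : ℝ → ℝ := fun x => T (α * (x + y₀)) with hf
  set f' : ℝ → ℝ := fun x => (1 / Real.cosh (α * (x + y₀))) ^ 2 * α with hf'
  have hfd : ∀ x ∈ Set.Ioi (0:ℝ), HasDerivWithinAt f (f' x) (Set.Ioi 0) x := by
    intro x _
    have hin : HasDerivAt (fun x : ℝ => α * (x + y₀)) α x := by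
      simpa using ((hasDerivAt_id x).add_const y₀).const_mul α
    exact ((hasDerivAt_T (α * (x + y₀))).comp x hin).hasDerivWithinAt
  have hmono : StrictMono f := by
    intro x y hxy
    exact T_strictMono (by nlinarith)
  have himg : f '' Set.Ioi 0 = Set.Ioo ξ 1 := by
    ext t
    constructor
    · rintro ⟨x, hx, rfl⟩
      refine ⟨?_, T_lt_one _⟩
      rw [← hTξ]
      exact T_strictMono (by simp only [Set.mem_Ioi] at hx; nlinarith)
    · rintro ⟨ht1, ht2⟩
      have htm1 : (-1:ℝ) < t := lt_trans (by linarith) ht1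
      refine ⟨arctanh t / α - y₀, ?_, ?_⟩
      · have : α * y₀ < arctanh t := by
          rw [← T_strictMono.lt_iff_lt, hTξ, T_arctanh htm1 ht2]
          exact ht1
        simp only [Set.mem_Ioi, sub_pos]
        rw [lt_div_iff₀ hαpos]
        nlinarith [this]
      · rw [hf]
        simp only
        rw [show α * (arctanh t / α - y₀ + y₀) = arctanh t by field_simp; ring]
        exact T_arctanh htm1 ht2
  -- the substitution: J = α * ∫_{Ioi 0} W
  set W : ℝ → ℝ := fun x => (((1 : ℝ) / Real.cosh (α * (x + y₀))) ^ 2) ^ q with hW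
  set J : ℝ := ∫ s in ξ..1, (1 - s ^ 2) ^ a with hJ
  have hJeq : J = α * ∫ x in Set.Ioi (0:ℝ), W x := by
    rw [hJ, intervalIntegral.integral_of_le hξlt1.le, integral_Ioc_eq_integral_Ioo, ← himg,
      integral_image_eq_integral_abs_deriv_smul measurableSet_Ioi hfd hmono.injective.injOn,
      ← integral_const_mul]
    refine setIntegral_congr_fun measurableSet_Ioi fun x _ => ?_
    have hcp : (0:ℝ) < ((1:ℝ) / Real.cosh (α * (x + y₀))) ^ 2 := by positivity
    rw [hf', hf, hW]
    simp only [smul_eq_mul]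
    rw [abs_of_pos (by positivity), T_sq, hq1a, Real.rpow_add hcp, Real.rpow_one]
    ring
  have hIW : ∫ x in Set.Ioi (0:ℝ), W x = J / α := by
    rw [hJeq]; field_simp
  -- the full integral
  have hIφ : ∫ x : ℝ, |φ x| ^ (p + 1) = Cc ^ q * (2 * (J / α)) := by
    have hae : (fun x : ℝ => |φ x| ^ (p + 1)) =ᵐ[(volume : Measure ℝ)]
        fun x => Cc ^ q * W |x| := by
      have h0 : ({(0:ℝ)} : Set ℝ)ᶜ ∈ ae (volume : Measure ℝ) :=
        compl_mem_ae_iff.mpr (measure_singleton 0)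
      filter_upwards [h0] with x hx
      have hx0 : x ≠ 0 := by simpa using hx
      have habs : |Real.sign x| = 1 := by
        rcases lt_trichotomy x 0 with h | h | h
        · rw [Real.sign_of_neg h]; norm_num
        · exact absurd h hx0
        · rw [Real.sign_of_pos h]; norm_num
      have hcp : (0:ℝ) < ((1:ℝ) / Real.cosh (α * (|x| + y₀))) ^ 2 := by positivity
      rw [hφ x hx0, abs_mul, habs, one_mul,
        abs_of_nonneg (Real.rpow_nonneg (by positivity) _),
        ← Real.rpow_mul (by positivity : (0:ℝ) ≤ Cc * ((1:ℝ) / Real.cosh (α * (|x| + y₀))) ^ 2),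
        show 1 / (p - 1) * (p + 1) = q by rw [hq]; field_simp,
        Real.mul_rpow hCpos.le hcp.le]
    rw [integral_congr_ae hae, integral_const_mul, integral_comp_abs (f := W), hIW]
  -- limits
  set g1 : ℝ → ℝ := fun u => (Cc * ((1:ℝ) / Real.cosh (α * (u + y₀))) ^ 2) ^ (1 / (p - 1))
    with hg1
  set G0 : ℝ := (Cc * ((1:ℝ) / Real.cosh (α * y₀)) ^ 2) ^ (1 / (p - 1)) with hG0
  have hg1c : Continuous g1 := by
    have hbase : Continuous fun u : ℝ => Cc * ((1:ℝ) / Real.cosh (α * (u + y₀))) ^ 2 :=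
      continuous_const.mul ((continuous_const.div
        (Real.continuous_cosh.comp (by fun_prop)) fun u => (Real.cosh_pos _).ne').pow 2)
    exact continuous_iff_continuousAt.2 fun u =>
      ContinuousAt.rpow_const hbase.continuousAt (Or.inr (by positivity))
  have hg10 : g1 0 = G0 := by rw [hg1, hG0]; norm_num
  have hLpG : Lp = G0 := by
    have h1 : Tendsto g1 (𝓝[>] (0:ℝ)) (𝓝 G0) := by
      rw [← hg10]; exact hg1c.continuousAt.continuousWithinAt.tendsto
    have h2 : Tendsto φ (𝓝[>] (0:ℝ)) (𝓝 G0) := by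
      refine h1.congr' ?_
      filter_upwards [self_mem_nhdsWithin] with x hx
      have hx0 : (0:ℝ) < x := hx
      rw [hφ x hx0.ne', Real.sign_of_pos hx0, abs_of_pos hx0, one_mul, hg1]
    exact tendsto_nhds_unique hLp h2
  have hLmG : Lm = -G0 := by
    have h1 : Tendsto (fun x : ℝ => -g1 (-x)) (𝓝[<] (0:ℝ)) (𝓝 (-G0)) := by
      have hc : Continuous fun x : ℝ => -g1 (-x) := (hg1c.comp continuous_neg).neg
      have := hc.continuousAt (x := (0:ℝ)).continuousWithinAt.tendsto (s := Set.Iio 0)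
      simpa [hg10] using this
    have h2 : Tendsto φ (𝓝[<] (0:ℝ)) (𝓝 (-G0)) := by
      refine h1.congr' ?_
      filter_upwards [self_mem_nhdsWithin] with x hx
      have hx0 : x < 0 := hx
      rw [hφ x hx0.ne, Real.sign_of_neg hx0, abs_of_neg hx0, hg1]
      ring
    exact tendsto_nhds_unique hLm h2
  -- value of (Lp - Lm)^2
  have hw0 : ((1:ℝ) / Real.cosh (α * y₀)) ^ 2 = 1 - ξ ^ 2 := by
    rw [← hTξ, ← T_sq]
  have hξsq : (0:ℝ) < 1 - ξ ^ 2 := by nlinarith [hξpos, hξlt1]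
  have hsq : (Lp - Lm) ^ 2 = 4 * (Cc ^ a * (1 - ξ ^ 2) ^ a) := by
    rw [hLpG, hLmG, show G0 - -G0 = 2 * G0 by ring, mul_pow, hG0, hw0,
      ← Real.rpow_natCast ((Cc * (1 - ξ ^ 2)) ^ (1 / (p - 1))) 2,
      ← Real.rpow_mul (by positivity),
      show 1 / (p - 1) * ((2:ℕ):ℝ) = a by push_cast; rw [ha]; ring,
      Real.mul_rpow hCpos.le hξsq.le]
    norm_num
  -- scalar identities
  have hγξ : ξ * (γ * Real.sqrt ω) = 2 := by rw [hξ]; field_simp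
  have hKC : (p - 5) * (p - 1) / (2 * (p + 1)) * (Cc ^ q * (2 * (J / α)))
      = ((p - 5) * J) * (Real.sqrt ω * Cc ^ a) := by
    rw [hq1a, Real.rpow_add hCpos, Real.rpow_one, hCc, hα]
    have h1 : Real.sqrt ω ≠ 0 := hs.ne'
    have h2 : p - 1 ≠ 0 := hp1.ne'
    have h3 : p + 1 ≠ 0 := by positivity
    field_simp
    ring_nf
    rw [show Real.sqrt ω ^ 2 = ω from Real.sq_sqrt hωpos.le]
    ring
  have hLHS : (1 / γ) * (Lp - Lm) ^ 2
      = (2 * ξ * (1 - ξ ^ 2) ^ a) * (Real.sqrt ω * Cc ^ a) := by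
    have h4 : (4:ℝ) / γ = 2 * ξ * Real.sqrt ω := by
      rw [hξ]; field_simp; ring
    calc (1 / γ) * (Lp - Lm) ^ 2
        = (4 / γ) * (Cc ^ a * (1 - ξ ^ 2) ^ a) := by rw [hsq]; ring
      _ = (2 * ξ * Real.sqrt ω) * (Cc ^ a * (1 - ξ ^ 2) ^ a) := by rw [h4]
      _ = (2 * ξ * (1 - ξ ^ 2) ^ a) * (Real.sqrt ω * Cc ^ a) := by ring
  have hpos2 : 0 < Real.sqrt ω * Cc ^ a := mul_pos hs (Real.rpow_pos_of_pos hCpos a)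
  have hfinal : ξ ≤ ξ₃ ↔ 4 / (γ ^ 2 * ξ₃ ^ 2) ≤ ω := by
    have hξ₃pos := hξ₃.1
    rw [hξ, div_le_iff₀ hγs, div_le_iff₀ (by positivity : (0:ℝ) < γ ^ 2 * ξ₃ ^ 2)]
    have hu2 : (ξ₃ * (γ * Real.sqrt ω)) ^ 2 = ω * (γ ^ 2 * ξ₃ ^ 2) := by
      rw [mul_pow, mul_pow, Real.sq_sqrt hωpos.le]; ring
    rw [two_le_iff_four_le_sq (by positivity : 0 < ξ₃ * (γ * Real.sqrt ω)), hu2]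
  rw [hIφ, hKC, hLHS, mul_le_mul_iff_of_pos_right hpos2]
  have step1 : 2 * ξ * (1 - ξ ^ 2) ^ a ≤ (p - 5) * J ↔
      ξ * (1 - ξ ^ 2) ^ a ≤ (p - 5) / 2 * J := by constructor <;> intro h <;> linarith
  rw [step1]
  exact (crux_sign p ξ₃ ξ hp hξ₃ hξeq huniq hξmem).trans hfinal
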